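/- Let X and Y be non-empty topological spaces such that X is compact and Y is pseudocompact. Then the product space X × Y is pseudocompact. -/
import Mathlib

/-- Let `X` and `Y` be non-empty topological spaces such that `X`
is compact and `Y` is pseudocompact (every continuous real-valued function on `Y` is
bounded).  Then the product space `X × Y` is pseudocompact. -/
theorem pseudocompact_prod_of_compact_pseudocompact
    {X Y : Type*} [TopologicalSpace X] [TopologicalSpace Y]
    [Nonempty X] [Nonempty Y] [CompactSpace X]
    (hY : ∀ f : Y → ℝ, Continuous f → ∃ M : ℝ, ∀ y, |f y| ≤ M) :
    ∀ f : X × Y → ℝ, Continuous f → ∃ M : ℝ, ∀ p, |f p| ≤ M := by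
  intro f hf
  let F : C(X × Y, ℝ) := ⟨f, hf⟩
  let G : C(Y, C(X, ℝ)) := (F.comp ⟨Prod.swap, continuous_swap⟩).curry
  have hg : Continuous fun y => ‖G y‖ := continuous_norm.comp G.continuous
  obtain ⟨M, hM⟩ := hY _ hg
  refine ⟨M, fun p => ?_⟩
  have h1 : |f p| = |(G p.2) p.1| := by simp [G, F, ContinuousMap.curry]
  rw [h1]
  calc |(G p.2) p.1| = ‖(G p.2) p.1‖ := rfl
    _ ≤ ‖G p.2‖ := (G p.2).norm_coe_le_norm p.1
    _ ≤ |‖G p.2‖| := le_abs_self _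
    _ ≤ M := hM p.2
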